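/- arXiv:1708.01150 — 2 statements merged into one kernel-verified Lean document; each statement's English description precedes it below -/
import Mathlib

section
/- Let k ∈ {-1, 0, 1} and suppose H, y : I → ℝ are differentiable with y > 0, satisfying Ḣ = -3H² - 2ky and ẏ = -2yH on an interval I. Then the quantity (H² + ky)/y³ is constant on I. -/
/-- For the curved FRW massless-scalar system `Ḣ = -3H² - 2ky`, `ẏ = -2yH`
with `y > 0`, the quantity `(H² + ky)/y³` is conserved. -/
theorem stmt5 (k : ℝ) (hk : k = -1 ∨ k = 0 ∨ k = 1)
    (I : Set ℝ) (hI : Convex ℝ I)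
    (H y H' y' : ℝ → ℝ)
    (hypos : ∀ t ∈ I, 0 < y t)
    (hH : ∀ t ∈ I, HasDerivAt H (H' t) t) (hy : ∀ t ∈ I, HasDerivAt y (y' t) t)
    (heqH : ∀ t ∈ I, H' t = -3 * (H t) ^ 2 - 2 * k * y t)
    (heqy : ∀ t ∈ I, y' t = -2 * y t * H t) :
    ∀ s ∈ I, ∀ t ∈ I,
      ((H s) ^ 2 + k * y s) / (y s) ^ 3 = ((H t) ^ 2 + k * y t) / (y t) ^ 3 := by
  set g : ℝ → ℝ := fun t => ((H t) ^ 2 + k * y t) / (y t) ^ 3 with hg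
  have hderiv : ∀ t ∈ I, HasDerivWithinAt g 0 I t := by
    intro t ht
    have hy0 : (y t) ^ 3 ≠ 0 := pow_ne_zero 3 (hypos t ht).ne'
    have hnum : HasDerivAt (fun t => (H t) ^ 2 + k * y t)
        (2 * H t * H' t + k * y' t) t := by
      have := ((hH t ht).fun_pow 2).fun_add ((hy t ht).const_mul k)
      simpa [mul_comm, mul_assoc, mul_left_comm] using this
    have hden : HasDerivAt (fun t => (y t) ^ 3) (3 * (y t) ^ 2 * y' t) t := by
      simpa [mul_comm, mul_assoc, mul_left_comm] using (hy t ht).fun_pow 3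
    have hdiv := hnum.div hden hy0
    have : ((2 * H t * H' t + k * y' t) * (y t) ^ 3 -
        ((H t) ^ 2 + k * y t) * (3 * (y t) ^ 2 * y' t)) / ((y t) ^ 3) ^ 2 = 0 := by
      rw [heqH t ht, heqy t ht]
      field_simp
      ring
    rw [this] at hdiv
    exact hdiv.hasDerivWithinAt
  intro s hs t ht
  have := hI.norm_image_sub_le_of_norm_hasDerivWithin_le (C := 0) hderiv
    (fun x _ => by simp) ht hs
  have h0 : ‖g s - g t‖ ≤ 0 := by simpa using this
  have := norm_sub_eq_zero_iff.mp (le_antisymm h0 (norm_nonneg _))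
  exact this
end

section
/- Let λ < 0 and set H_dS = √(5/(24|λ|)). Then a(t) = a₀ e^{H_dS t} and φ(t) = φ₀ e^{-(5/2) H_dS t} satisfy the pure Gauss-Bonnet equations 5/(2ȧ²) = -12λ/a² and φ̇/φ = 12λ ȧ³/a³. -/
/-- Pure Gauss-Bonnet de Sitter solution: for `λ < 0`, `a(t) = a₀ e^{H_dS t}` and
`φ(t) = φ₀ e^{-(5/2)H_dS t}` with `H_dS = √(5/(24|λ|))` solve the pure
Gauss-Bonnet equations. -/
theorem stmt12 (lam a₀ φ₀ : ℝ) (hlam : lam < 0) (ha₀ : 0 < a₀) (hφ₀ : φ₀ ≠ 0)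
    (HdS : ℝ) (hHdS : HdS = Real.sqrt (5 / (24 * |lam|)))
    (a φ : ℝ → ℝ)
    (ha : a = fun t : ℝ => a₀ * Real.exp (HdS * t))
    (hφ : φ = fun t : ℝ => φ₀ * Real.exp (-(5 / 2) * HdS * t)) :
    ∀ t : ℝ,
      5 / (2 * (deriv a t) ^ 2) = -12 * lam / (a t) ^ 2 ∧
      deriv φ t / φ t = 12 * lam * (deriv a t) ^ 3 / (a t) ^ 3 := by
  have habs : |lam| = -lam := abs_of_neg hlam
  have hpos : (0:ℝ) < 5 / (24 * |lam|) := by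
    rw [habs]
    have h' : 0 < -lam := neg_pos.mpr hlam
    positivity
  have hH2 : HdS ^ 2 = 5 / (24 * (-lam)) := by
    rw [hHdS, Real.sq_sqrt hpos.le, habs]
  have hHpos : 0 < HdS := by
    rw [hHdS]; exact Real.sqrt_pos.mpr hpos
  intro t
  have hda : deriv a t = a₀ * HdS * Real.exp (HdS * t) := by
    rw [ha]
    have : deriv (fun t : ℝ => a₀ * Real.exp (HdS * t)) t
        = a₀ * (Real.exp (HdS * t) * HdS) := by
      apply HasDerivAt.deriv
      have := (((hasDerivAt_id t).const_mul HdS).exp).const_mul a₀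
      simpa using this
    rw [this]; ring
  have hdφ : deriv φ t = φ₀ * (-(5/2) * HdS) * Real.exp (-(5/2) * HdS * t) := by
    rw [hφ]
    have : deriv (fun t : ℝ => φ₀ * Real.exp (-(5/2) * HdS * t)) t
        = φ₀ * (Real.exp (-(5/2) * HdS * t) * (-(5/2) * HdS)) := by
      apply HasDerivAt.deriv
      have := (((hasDerivAt_id t).const_mul (-(5/2) * HdS)).exp).const_mul φ₀
      simpa using this
    rw [this]; ring
  have hexp : Real.exp (HdS * t) ≠ 0 := Real.exp_ne_zero _
  have hexp2 : Real.exp (-(5/2) * HdS * t) ≠ 0 := Real.exp_ne_zero _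
  have hlam' : lam ≠ 0 := hlam.ne
  constructor
  · rw [hda, ha]
    simp only
    have hkey : -24 * lam * HdS ^ 2 = 5 := by
      rw [hH2]; field_simp
    field_simp
    linear_combination (-1) * hkey
  · rw [hdφ, hφ, hda, ha]
    simp only
    have key : 12 * lam * HdS ^ 3 = -(5/2) * HdS := by
      have : HdS ^ 3 = HdS * HdS ^ 2 := by ring
      rw [this, hH2]
      field_simp
      ring
    field_simp
    have hk : -24 * lam * HdS ^ 2 = 5 := by
      rw [hH2]; field_simp
    linear_combination hk
end
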